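/- Let G and G' be two vertex-disjoint graphs, each with at least two vertices, let v be a vertex of G and v' a vertex of G', and let G'' be the graph obtained from the disjoint union of G and G' by adding the edge vv'. For a set S'' of vertices of G'': S'' is a type I set for v' in G'' with L_{S''}(v') = −2 if and only if S'' = S ∪ S' where S = S'' ∩ V(G) is a type I set for v in G, S' = S'' ∩ V(G') is a type I set for v' in G', and the pair (L_S(v), L_{S'}(v')) belongs to {(1,−2), (2,−2), (2,−1)}. -/

import Mathlib

/-- A set of vertices is independent: no two of its vertices are adjacent. -/
def IndepSet {V : Type*} (G : SimpleGraph V) (S : Set V) : Prop :=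
  ∀ u ∈ S, ∀ w ∈ S, ¬ G.Adj u w

/-- `S` is a type I set for `v` in `G`: `S` is independent, every vertex
`u ∉ S ∪ {v}` has at least one and at most two neighbors in `S`, and `v` either
belongs to `S` or has at most two neighbors in `S`. -/
def TypeISet {V : Type*} (G : SimpleGraph V) (v : V) (S : Set V) : Prop :=
  IndepSet G S ∧
    (∀ u, u ∉ S → u ≠ v →
      1 ≤ (S ∩ G.neighborSet u).ncard ∧ (S ∩ G.neighborSet u).ncard ≤ 2) ∧
    (v ∈ S ∨ (S ∩ G.neighborSet v).ncard ≤ 2)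

/-- The labeling `L_S(v) = l` : `0` if `v ∈ S`; `k ≥ 1` if `v ∉ S` and `v` has exactly
`k` neighbors in `S`; `-1` if `N[v] ∩ S = ∅` and every neighbor of `v` has exactly one
neighbor in `S`; `-2` if `N[v] ∩ S = ∅` and some neighbor of `v` has exactly two
neighbors in `S`. -/
def HasLabel {V : Type*} (G : SimpleGraph V) (v : V) (S : Set V) (l : ℤ) : Prop :=
  (v ∈ S ∧ l = 0) ∨
  (v ∉ S ∧ ∃ k : ℕ, 1 ≤ k ∧ (S ∩ G.neighborSet v).ncard = k ∧ l = (k : ℤ)) ∨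
  (v ∉ S ∧ S ∩ G.neighborSet v = ∅ ∧
    (∀ u ∈ G.neighborSet v, (S ∩ G.neighborSet u).ncard = 1) ∧ l = -1) ∨
  (v ∉ S ∧ S ∩ G.neighborSet v = ∅ ∧
    (∃ u ∈ G.neighborSet v, (S ∩ G.neighborSet u).ncard = 2) ∧ l = -2)

/-- The star `K_{1,r}` with center `none` and the `r` leaves `some i`. -/
def starGraph (r : ℕ) : SimpleGraph (Option (Fin r)) where
  Adj a b := (a = none ∧ b ≠ none) ∨ (a ≠ none ∧ b = none)
  symm := ⟨by intro a b h; tauto⟩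
  loopless := ⟨by intro a h; tauto⟩

/-- The graph obtained from `G` by adding a new vertex `none` adjacent only to `v`. -/
def addLeaf {V : Type*} (G : SimpleGraph V) (v : V) : SimpleGraph (Option V) where
  Adj a b := match a, b with
    | some x, some y => G.Adj x y
    | none, some y => y = v
    | some x, none => x = v
    | none, none => False
  symm := ⟨by
    intro a b h
    match a, b with
    | some x, some y => exact h.symm
    | none, some y => exact h
    | some x, none => exact h
    | none, none => exact h⟩
  loopless := ⟨by
    intro a h
    match a with
    | some x => exact G.irrefl h
    | none => exact h⟩

/-- The graph obtained from the disjoint union of `G` and `H` by adding the edge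
between `v` (in `G`) and `v'` (in `H`). -/
def joinAt {V W : Type*} (G : SimpleGraph V) (H : SimpleGraph W) (v : V) (v' : W) :
    SimpleGraph (V ⊕ W) where
  Adj a b := match a, b with
    | Sum.inl x, Sum.inl y => G.Adj x y
    | Sum.inr x, Sum.inr y => H.Adj x y
    | Sum.inl x, Sum.inr y => x = v ∧ y = v'
    | Sum.inr x, Sum.inl y => x = v' ∧ y = v
  symm := ⟨by
    intro a b h
    match a, b with
    | Sum.inl x, Sum.inl y => exact h.symm
    | Sum.inr x, Sum.inr y => exact h.symm
    | Sum.inl x, Sum.inr y => exact ⟨h.2, h.1⟩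
    | Sum.inr x, Sum.inl y => exact ⟨h.2, h.1⟩⟩
  loopless := ⟨by
    intro a h
    match a with
    | Sum.inl x => exact G.irrefl h
    | Sum.inr x => exact H.irrefl h⟩

section Adj
variable {V W : Type*} (G : SimpleGraph V) (G' : SimpleGraph W) (v : V) (v' : W)

lemma joinAt_inl_inl (x y : V) :
    (joinAt G G' v v').Adj (Sum.inl x) (Sum.inl y) ↔ G.Adj x y := Iff.rfl
lemma joinAt_inr_inr (x y : W) :
    (joinAt G G' v v').Adj (Sum.inr x) (Sum.inr y) ↔ G'.Adj x y := Iff.rfl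
lemma joinAt_inl_inr (x : V) (y : W) :
    (joinAt G G' v v').Adj (Sum.inl x) (Sum.inr y) ↔ x = v ∧ y = v' := Iff.rfl
lemma joinAt_inr_inl (x : W) (y : V) :
    (joinAt G G' v v').Adj (Sum.inr x) (Sum.inl y) ↔ x = v' ∧ y = v := Iff.rfl
end Adj
section Helpers

variable {V W : Type*}

lemma ncard_inl (S'' : Set (V ⊕ W)) (X : Set V) :
    (S'' ∩ Sum.inl '' X).ncard = (Sum.inl ⁻¹' S'' ∩ X).ncard := by
  rw [show S'' ∩ Sum.inl '' X = Sum.inl '' (Sum.inl ⁻¹' S'' ∩ X) by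
    rw [Set.inter_comm (Sum.inl ⁻¹' S''), Set.image_inter_preimage, Set.inter_comm],
    Set.ncard_image_of_injective _ Sum.inl_injective]

lemma ncard_inr (S'' : Set (V ⊕ W)) (X : Set W) :
    (S'' ∩ Sum.inr '' X).ncard = (Sum.inr ⁻¹' S'' ∩ X).ncard := by
  rw [show S'' ∩ Sum.inr '' X = Sum.inr '' (Sum.inr ⁻¹' S'' ∩ X) by
    rw [Set.inter_comm (Sum.inr ⁻¹' S''), Set.image_inter_preimage, Set.inter_comm],
    Set.ncard_image_of_injective _ Sum.inr_injective]

variable (G : SimpleGraph V) (G' : SimpleGraph W) (v : V) (v' : W)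

lemma nbs_inl {u : V} (h : u ≠ v) :
    (joinAt G G' v v').neighborSet (Sum.inl u) = Sum.inl '' G.neighborSet u := by
  ext x
  cases x with
  | inl y =>
    simp only [SimpleGraph.mem_neighborSet, Set.mem_image]
    constructor
    · intro hy; exact ⟨y, hy, rfl⟩
    · rintro ⟨z, hz, hzy⟩; cases hzy; exact hz
  | inr y =>
    simp only [SimpleGraph.mem_neighborSet, Set.mem_image]
    constructor
    · rintro ⟨h1, h2⟩; exact absurd h1 h
    · rintro ⟨z, hz, hzy⟩; cases hzy

lemma nbs_inl_v :
    (joinAt G G' v v').neighborSet (Sum.inl v) =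
      Sum.inl '' G.neighborSet v ∪ {Sum.inr v'} := by
  ext x
  cases x with
  | inl y =>
    simp only [SimpleGraph.mem_neighborSet, Set.mem_union, Set.mem_image,
      Set.mem_singleton_iff]
    constructor
    · intro hy; exact Or.inl ⟨y, hy, rfl⟩
    · rintro (⟨z, hz, hzy⟩ | h); · cases hzy; exact hz
      · cases h
  | inr y =>
    simp only [SimpleGraph.mem_neighborSet, Set.mem_union, Set.mem_image,
      Set.mem_singleton_iff]
    constructor
    · rintro ⟨-, h2⟩; exact Or.inr (by rw [h2])
    · rintro (⟨z, hz, hzy⟩ | h); · cases hzy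
      · exact ⟨rfl, by injection h⟩

lemma nbs_inr {u : W} (h : u ≠ v') :
    (joinAt G G' v v').neighborSet (Sum.inr u) = Sum.inr '' G'.neighborSet u := by
  ext x
  cases x with
  | inr y =>
    simp only [SimpleGraph.mem_neighborSet, Set.mem_image]
    constructor
    · intro hy; exact ⟨y, hy, rfl⟩
    · rintro ⟨z, hz, hzy⟩; cases hzy; exact hz
  | inl y =>
    simp only [SimpleGraph.mem_neighborSet, Set.mem_image]
    constructor
    · rintro ⟨h1, h2⟩; exact absurd h1 h
    · rintro ⟨z, hz, hzy⟩; cases hzy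

lemma nbs_inr_v' :
    (joinAt G G' v v').neighborSet (Sum.inr v') =
      Sum.inr '' G'.neighborSet v' ∪ {Sum.inl v} := by
  ext x
  cases x with
  | inr y =>
    simp only [SimpleGraph.mem_neighborSet, Set.mem_union, Set.mem_image,
      Set.mem_singleton_iff]
    constructor
    · intro hy; exact Or.inl ⟨y, hy, rfl⟩
    · rintro (⟨z, hz, hzy⟩ | h); · cases hzy; exact hz
      · cases h
  | inl y =>
    simp only [SimpleGraph.mem_neighborSet, Set.mem_union, Set.mem_image,
      Set.mem_singleton_iff]
    constructor
    · rintro ⟨-, h2⟩; exact Or.inr (by rw [h2])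
    · rintro (⟨z, hz, hzy⟩ | h); · cases hzy
      · exact ⟨rfl, by injection h⟩

lemma hasLabel_pos_iff (S : Set V) (k : ℕ) (hk : 1 ≤ k) :
    HasLabel G v S (k : ℤ) ↔ v ∉ S ∧ (S ∩ G.neighborSet v).ncard = k := by
  constructor
  · rintro (⟨-, h⟩ | ⟨hv, m, hm1, hc, he⟩ | ⟨-, -, -, h⟩ | ⟨-, -, -, h⟩)
    · omega
    · refine ⟨hv, ?_⟩; rw [hc]; omega
    · omega
    · omega
  · rintro ⟨hv, hc⟩
    exact Or.inr (Or.inl ⟨hv, k, hk, hc, rfl⟩)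

lemma hasLabel_neg_one_iff (S : Set V) :
    HasLabel G v S (-1) ↔ v ∉ S ∧ S ∩ G.neighborSet v = ∅ ∧
      ∀ u ∈ G.neighborSet v, (S ∩ G.neighborSet u).ncard = 1 := by
  constructor
  · rintro (⟨-, h⟩ | ⟨-, m, hm1, -, he⟩ | ⟨hv, he, hall, -⟩ | ⟨-, -, -, h⟩)
    · omega
    · omega
    · exact ⟨hv, he, hall⟩
    · omega
  · rintro ⟨hv, he, hall⟩
    exact Or.inr (Or.inr (Or.inl ⟨hv, he, hall, rfl⟩))

lemma hasLabel_neg_two_iff (S : Set V) :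
    HasLabel G v S (-2) ↔ v ∉ S ∧ S ∩ G.neighborSet v = ∅ ∧
      ∃ u ∈ G.neighborSet v, (S ∩ G.neighborSet u).ncard = 2 := by
  constructor
  · rintro (⟨-, h⟩ | ⟨-, m, hm1, -, he⟩ | ⟨-, -, -, h⟩ | ⟨hv, he, hex, -⟩)
    · omega
    · omega
    · omega
    · exact ⟨hv, he, hex⟩
  · rintro ⟨hv, he, hex⟩
    exact Or.inr (Or.inr (Or.inr ⟨hv, he, hex, rfl⟩))

end Helpers
theorem statement15 {V W : Type*} [Fintype V] [Fintype W] [Nontrivial V]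
    [Nontrivial W] (G : SimpleGraph V) (G' : SimpleGraph W) (v : V) (v' : W)
    (S'' : Set (V ⊕ W)) :
    (TypeISet (joinAt G G' v v') (Sum.inr v') S'' ∧
        HasLabel (joinAt G G' v v') (Sum.inr v') S'' (-2)) ↔
      ∃ (S : Set V) (S' : Set W), S = Sum.inl ⁻¹' S'' ∧ S' = Sum.inr ⁻¹' S'' ∧
        S'' = Sum.inl '' S ∪ Sum.inr '' S' ∧ TypeISet G v S ∧ TypeISet G' v' S' ∧
        ((HasLabel G v S 1 ∧ HasLabel G' v' S' (-2)) ∨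
         (HasLabel G v S 2 ∧ HasLabel G' v' S' (-2)) ∨
         (HasLabel G v S 2 ∧ HasLabel G' v' S' (-1))) := by
  set J := joinAt G G' v v' with hJ
  set S : Set V := Sum.inl ⁻¹' S'' with hSdef
  set S' : Set W := Sum.inr ⁻¹' S'' with hS'def
  -- count lemmas
  have cnt_l : ∀ u : V, u ≠ v →
      (S'' ∩ J.neighborSet (Sum.inl u)).ncard = (S ∩ G.neighborSet u).ncard := by
    intro u hu
    rw [hJ, nbs_inl G G' v v' hu, ncard_inl]
  have cnt_r : ∀ u : W, u ≠ v' →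
      (S'' ∩ J.neighborSet (Sum.inr u)).ncard = (S' ∩ G'.neighborSet u).ncard := by
    intro u hu
    rw [hJ, nbs_inr G G' v v' hu, ncard_inr]
  have cnt_lv : Sum.inr v' ∉ S'' →
      (S'' ∩ J.neighborSet (Sum.inl v)).ncard = (S ∩ G.neighborSet v).ncard := by
    intro hv'S
    rw [hJ, nbs_inl_v G G' v v']
    rw [show S'' ∩ (Sum.inl '' G.neighborSet v ∪ {Sum.inr v'})
        = S'' ∩ Sum.inl '' G.neighborSet v by
      ext x
      simp only [Set.mem_inter_iff, Set.mem_union, Set.mem_singleton_iff]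
      constructor
      · rintro ⟨hx, (h | rfl)⟩
        · exact ⟨hx, h⟩
        · exact absurd hx hv'S
      · rintro ⟨hx, h⟩; exact ⟨hx, Or.inl h⟩]
    rw [ncard_inl]
  constructor
  · -- forward
    rintro ⟨⟨hind, hdeg, -⟩, hlab⟩
    rw [hasLabel_neg_two_iff] at hlab
    obtain ⟨hv'S, hempty, u'', hu''adj, hu''2⟩ := hlab
    rw [hJ, nbs_inr_v' G G' v v'] at hempty
    have hvS : Sum.inl v ∉ S'' := by
      intro h
      have : Sum.inl v ∈ S'' ∩ (Sum.inr '' G'.neighborSet v' ∪ {Sum.inl v}) :=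
        ⟨h, Or.inr rfl⟩
      rw [hempty] at this
      exact this
    have hS'N : S' ∩ G'.neighborSet v' = ∅ := by
      rw [Set.eq_empty_iff_forall_notMem]
      rintro y ⟨hy1, hy2⟩
      have : Sum.inr y ∈ S'' ∩ (Sum.inr '' G'.neighborSet v' ∪ {Sum.inl v}) :=
        ⟨hy1, Or.inl ⟨y, hy2, rfl⟩⟩
      rw [hempty] at this
      exact this
    -- counts at v
    have hdv := hdeg (Sum.inl v) hvS (by simp)
    rw [cnt_lv hv'S] at hdv
    -- Type I set for G
    have hTI : TypeISet G v S := by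
      refine ⟨?_, ?_, Or.inr hdv.2⟩
      · intro a ha b hb hab
        exact hind (Sum.inl a) ha (Sum.inl b) hb hab
      · intro u hu hne
        have := hdeg (Sum.inl u) hu (by simp)
        rwa [cnt_l u hne] at this
    -- neighbor counts for G' side
    have hnb : ∀ u ∈ G'.neighborSet v', (S' ∩ G'.neighborSet u).ncard = 1 ∨
        (S' ∩ G'.neighborSet u).ncard = 2 := by
      intro u hu
      have hune : u ≠ v' := fun h => G'.irrefl (v := v') (h ▸ hu)
      have huS : u ∉ S' := by
        intro h
        have : u ∈ S' ∩ G'.neighborSet v' := ⟨h, hu⟩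
        rw [hS'N] at this
        exact this
      have := hdeg (Sum.inr u) huS (by simp [hune])
      rw [cnt_r u hune] at this
      omega
    have hTI' : TypeISet G' v' S' := by
      refine ⟨?_, ?_, Or.inr ?_⟩
      · intro a ha b hb hab
        exact hind (Sum.inr a) ha (Sum.inr b) hb hab
      · intro u hu hne
        have := hdeg (Sum.inr u) hu (by simp [hne])
        rwa [cnt_r u hne] at this
      · rw [hS'N, Set.ncard_empty]; omega
    have hv'notS' : v' ∉ S' := hv'S
    refine ⟨S, S', rfl, rfl, ?_, hTI, hTI', ?_⟩
    · ext x
      cases x with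
      | inl a =>
        simp only [Set.mem_union, Set.mem_image, hSdef, hS'def, Set.mem_preimage]
        constructor
        · intro h; exact Or.inl ⟨a, h, rfl⟩
        · rintro (⟨b, hb, hba⟩ | ⟨b, hb, hba⟩)
          · cases hba; exact hb
          · cases hba
      | inr a =>
        simp only [Set.mem_union, Set.mem_image, hSdef, hS'def, Set.mem_preimage]
        constructor
        · intro h; exact Or.inr ⟨a, h, rfl⟩
        · rintro (⟨b, hb, hba⟩ | ⟨b, hb, hba⟩)
          · cases hba
          · cases hba; exact hb
    · -- label analysis
      have hlabv : ∀ k : ℕ, (S ∩ G.neighborSet v).ncard = k → 1 ≤ k →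
          HasLabel G v S (k : ℤ) :=
        fun k hc hk => (hasLabel_pos_iff G v S k hk).mpr ⟨hvS, hc⟩
      cases u'' with
      | inl x =>
        have hxv : x = v := ((joinAt_inr_inl G G' v v' v' x).mp hu''adj).2
        subst hxv
        rw [cnt_lv hv'S] at hu''2
        by_cases hex : ∃ u ∈ G'.neighborSet v', (S' ∩ G'.neighborSet u).ncard = 2
        · refine Or.inr (Or.inl ⟨?_, ?_⟩)
          · exact_mod_cast hlabv 2 hu''2 (by norm_num)
          · exact (hasLabel_neg_two_iff G' v' S').mpr ⟨hv'notS', hS'N, hex⟩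
        · refine Or.inr (Or.inr ⟨?_, ?_⟩)
          · exact_mod_cast hlabv 2 hu''2 (by norm_num)
          · refine (hasLabel_neg_one_iff G' v' S').mpr ⟨hv'notS', hS'N, ?_⟩
            intro u hu
            rcases hnb u hu with h | h
            · exact h
            · exact absurd ⟨u, hu, h⟩ hex
      | inr y =>
        have hadj : G'.Adj v' y := ((joinAt_inr_inr G G' v v' v' y).mp hu''adj)
        have hyne : y ≠ v' := fun h => G'.irrefl (v := v') (h ▸ hadj)
        rw [cnt_r y hyne] at hu''2
        have hlab' : HasLabel G' v' S' (-2) :=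
          (hasLabel_neg_two_iff G' v' S').mpr ⟨hv'notS', hS'N, y, hadj, hu''2⟩
        rcases (show (S ∩ G.neighborSet v).ncard = 1 ∨
            (S ∩ G.neighborSet v).ncard = 2 by omega) with h | h
        · exact Or.inl ⟨by exact_mod_cast hlabv 1 h (by norm_num), hlab'⟩
        · exact Or.inr (Or.inl ⟨by exact_mod_cast hlabv 2 h (by norm_num), hlab'⟩)
  · -- backward
    rintro ⟨S0, S0', hS0, hS0', -, hTI, hTI', hcase⟩
    subst hS0
    subst hS0'
    obtain ⟨hind, hdeg, -⟩ := hTI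
    obtain ⟨hind', hdeg', -⟩ := hTI'
    -- extract label data
    have hmain : v ∉ S ∧ v' ∉ S' ∧ S' ∩ G'.neighborSet v' = ∅ ∧
        ((S ∩ G.neighborSet v).ncard = 1 ∨ (S ∩ G.neighborSet v).ncard = 2) ∧
        ((∃ u ∈ G'.neighborSet v', (S' ∩ G'.neighborSet u).ncard = 2) ∨
          (S ∩ G.neighborSet v).ncard = 2) := by
      rcases hcase with ⟨h1, h2⟩ | ⟨h1, h2⟩ | ⟨h1, h2⟩
      · obtain ⟨hvS, hc⟩ := (hasLabel_pos_iff G v S 1 le_rfl).mp (by exact_mod_cast h1)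
        obtain ⟨hv', hN', hex⟩ := (hasLabel_neg_two_iff G' v' S').mp h2
        exact ⟨hvS, hv', hN', Or.inl hc, Or.inl hex⟩
      · obtain ⟨hvS, hc⟩ :=
          (hasLabel_pos_iff G v S 2 (by norm_num)).mp (by exact_mod_cast h1)
        obtain ⟨hv', hN', hex⟩ := (hasLabel_neg_two_iff G' v' S').mp h2
        exact ⟨hvS, hv', hN', Or.inr hc, Or.inl hex⟩
      · obtain ⟨hvS, hc⟩ :=
          (hasLabel_pos_iff G v S 2 (by norm_num)).mp (by exact_mod_cast h1)
        obtain ⟨hv', hN', -⟩ := (hasLabel_neg_one_iff G' v' S').mp h2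
        exact ⟨hvS, hv', hN', Or.inr hc, Or.inr hc⟩
    obtain ⟨hvS, hv'S', hN', hkv, hwit⟩ := hmain
    have hv'S'' : Sum.inr v' ∉ S'' := hv'S'
    have hvS'' : Sum.inl v ∉ S'' := hvS
    have hSempty : S'' ∩ J.neighborSet (Sum.inr v') = ∅ := by
      rw [hJ, nbs_inr_v' G G' v v', Set.eq_empty_iff_forall_notMem]
      rintro x ⟨hx, (⟨z, hz, rfl⟩ | rfl)⟩
      · have : z ∈ S' ∩ G'.neighborSet v' := ⟨hx, hz⟩
        rw [hN'] at this
        exact this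
      · exact hvS'' hx
    constructor
    · refine ⟨?_, ?_, Or.inr ?_⟩
      · intro a ha b hb hab
        cases a with
        | inl x =>
          cases b with
          | inl y => exact hind x ha y hb hab
          | inr y =>
            obtain ⟨rfl, rfl⟩ := (joinAt_inl_inr G G' v v' x y).mp hab
            exact hvS'' ha
        | inr x =>
          cases b with
          | inl y =>
            obtain ⟨rfl, rfl⟩ := (joinAt_inr_inl G G' v v' x y).mp hab
            exact hvS'' hb
          | inr y => exact hind' x ha y hb hab
      · rintro (a | a) hu hne
        · by_cases hav : a = v
          · rw [hav, cnt_lv hv'S'']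
            rcases hkv with h | h <;> rw [h] <;> norm_num
          · rw [cnt_l a hav]
            exact hdeg a hu hav
        · have hane : a ≠ v' := fun h => hne (by rw [h])
          rw [cnt_r a hane]
          exact hdeg' a hu hane
      · rw [hSempty, Set.ncard_empty]; omega
    · refine (hasLabel_neg_two_iff J (Sum.inr v') S'').mpr ⟨hv'S'', hSempty, ?_⟩
      rcases hwit with ⟨u, hu, h2⟩ | hkv2
      · refine ⟨Sum.inr u, hu, ?_⟩
        have hune : u ≠ v' := fun h => G'.irrefl (v := v') (h ▸ hu)
        rw [cnt_r u hune]
        exact h2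
      · refine ⟨Sum.inl v, ⟨rfl, rfl⟩, ?_⟩
        rw [cnt_lv hv'S'']
        exact hkv2
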